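/- Let T be a finite tree, let k be a positive integer, let r be a vertex of T, and let S ⊆ V \ {r} be a set of vertices such that d(r,z) > k for all z ∈ S. Suppose that for every connected component C of the forest obtained by deleting r from T: (i) every vertex x ∈ C satisfies d(x,z) ≤ k for some z ∈ S ∩ C, and (ii) for every pair of distinct vertices x, y ∈ C there is a vertex z ∈ S ∩ C with d_k(x,z) ≠ d_k(y,z). Then S is a k-truncated resolving set of T. -/
import Mathlib


/-- The `k`-truncated distance: `min (d u v) (k+1)`. -/
noncomputable def truncDist {V : Type*} (G : SimpleGraph V) (k : ℕ) (u v : V) : ℕ :=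
  min (G.dist u v) (k + 1)

/-- `S` is a `k`-truncated resolving set of `G`. -/
def IsTruncResolvingSet {V : Type*} (G : SimpleGraph V) (k : ℕ) (S : Set V) : Prop :=
  ∀ u v : V, u ≠ v → ∃ w ∈ S, truncDist G k u w ≠ truncDist G k v w

/-- A walk whose support lies in `s` lifts to reachability in the induced subgraph. -/
lemma lift_walk {V : Type*} {G : SimpleGraph V} {s : Set V} {u v : V} (hu : u ∈ s) (hv : v ∈ s)
    (p : G.Walk u v) (hp : ∀ x ∈ p.support, x ∈ s) :
    (G.induce s).Reachable ⟨u, hu⟩ ⟨v, hv⟩ := by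
  induction p with
  | nil => exact SimpleGraph.Reachable.refl _
  | @cons a b c h q ih =>
    have hb : b ∈ s := hp _ (by simp)
    have hadj : (G.induce s).Adj ⟨a, hu⟩ ⟨b, hb⟩ := h
    exact hadj.reachable.trans (ih hb hv (fun x hx => hp x (by simp [hx])))

theorem isResolving_of_components {V : Type*} [Fintype V] (G : SimpleGraph V)
    (hT : G.IsTree) (k : ℕ) (hk : 0 < k) (r : V) (S : Set V) (hrS : r ∉ S)
    (hr : ∀ z ∈ S, k < G.dist r z)
    (hdom : ∀ x : ({r}ᶜ : Set V), ∃ z : ({r}ᶜ : Set V), (z : V) ∈ S ∧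
      (G.induce ({r}ᶜ : Set V)).Reachable x z ∧ G.dist (x : V) (z : V) ≤ k)
    (hres : ∀ x y : ({r}ᶜ : Set V), (G.induce ({r}ᶜ : Set V)).Reachable x y → x ≠ y →
      ∃ z : ({r}ᶜ : Set V), (z : V) ∈ S ∧ (G.induce ({r}ᶜ : Set V)).Reachable x z ∧
        truncDist G k (x : V) (z : V) ≠ truncDist G k (y : V) (z : V)) :
    IsTruncResolvingSet G k S := by
  classical
  have hconn : G.Connected := hT.isConnected
  -- r is truncated-far from every z ∈ S
  have htr : ∀ z ∈ S, truncDist G k r z = k + 1 := by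
    intro z hz
    exact min_eq_right (hr z hz)
  -- if x is not reachable to z in G - r (both ≠ r), then dist x z > k for z ∈ S
  have hfar : ∀ (x z : V) (hx : x ∈ ({r}ᶜ : Set V)) (hz' : z ∈ ({r}ᶜ : Set V)), z ∈ S →
      ¬ (G.induce ({r}ᶜ : Set V)).Reachable ⟨x, hx⟩ ⟨z, hz'⟩ →
      truncDist G k x z = k + 1 := by
    intro x z hx hz' hzS hnr
    apply min_eq_right
    obtain ⟨p, hp⟩ := hconn.exists_walk_length_eq_dist x z
    have hrp : r ∈ p.support := by
      by_contra hnp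
      exact hnr (lift_walk hx hz' p (fun y hy => fun (h : y = r) => hnp (h ▸ hy)))
    calc k + 1 ≤ G.dist r z := hr z hzS
      _ ≤ (p.dropUntil r hrp).length := SimpleGraph.dist_le _
      _ ≤ p.length := SimpleGraph.Walk.length_dropUntil_le p hrp
      _ = G.dist x z := hp
  intro u v huv
  by_cases hu : u = r
  · have hv : v ∈ ({r}ᶜ : Set V) := fun h => huv (hu.trans h.symm)
    obtain ⟨z, hzS, _, hzd⟩ := hdom ⟨v, hv⟩
    refine ⟨z, hzS, ?_⟩
    have h1 : truncDist G k u (z : V) = k + 1 := by rw [hu]; exact htr z hzS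
    have h2 : truncDist G k v (z : V) ≤ k := le_trans (min_le_left _ _) hzd
    omega
  · by_cases hv : v = r
    · have hu' : u ∈ ({r}ᶜ : Set V) := hu
      obtain ⟨z, hzS, _, hzd⟩ := hdom ⟨u, hu'⟩
      refine ⟨z, hzS, ?_⟩
      have h1 : truncDist G k v (z : V) = k + 1 := by rw [hv]; exact htr z hzS
      have h2 : truncDist G k u (z : V) ≤ k := le_trans (min_le_left _ _) hzd
      omega
    · have hu' : u ∈ ({r}ᶜ : Set V) := hu
      have hv' : v ∈ ({r}ᶜ : Set V) := hv
      by_cases hreach : (G.induce ({r}ᶜ : Set V)).Reachable ⟨u, hu'⟩ ⟨v, hv'⟩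
      · obtain ⟨z, hzS, _, hzd⟩ := hres ⟨u, hu'⟩ ⟨v, hv'⟩ hreach
          (fun h => huv (congrArg Subtype.val h))
        exact ⟨z, hzS, hzd⟩
      · obtain ⟨z, hzS, hzr, hzd⟩ := hdom ⟨u, hu'⟩
        refine ⟨z, hzS, ?_⟩
        have hnrv : ¬ (G.induce ({r}ᶜ : Set V)).Reachable ⟨v, hv'⟩ z :=
          fun h => hreach (hzr.trans h.symm)
        have h1 : truncDist G k v (z : V) = k + 1 := hfar v z hv' z.2 hzS hnrv
        have h2 : truncDist G k u (z : V) ≤ k := le_trans (min_le_left _ _) hzd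
        omega
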